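/- Let $R$ be a regular Noetherian ring of characteristic $p > 0$ (so the Frobenius endomorphism is flat). Then every ideal of $R$ equals its Frobenius closure: for all ideals $I$ and $x \in R$, if $x^q \in I^{[q]}$ for some $q = p^e$, then $x \in I$. -/

import Mathlib

/-- The bracket power `I^{[q]}`: the ideal generated by `q`-th powers of
elements of `I`. -/
def bracketPower {R : Type} [CommRing R] (I : Ideal R) (q : ℕ) : Ideal R :=
  Ideal.span ((· ^ q) '' (I : Set R))

private lemma flat_colon {R S : Type} [CommRing R] [CommRing S] (f : R →+* S)
    (hf : f.Flat) (I : Ideal R) (x : R) (h : f x ∈ Ideal.map f I) :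
    (1 : S) ∈ Ideal.map f (I.colon (Ideal.span {x})) := by
  algebraize [f]
  have hsmul : ∀ (r : R) (s : S), r • s = f r * s := fun r s => Algebra.smul_def r s
  rw [Ideal.map, Ideal.span, Submodule.mem_span_set'] at h
  obtain ⟨n, c, g, hg⟩ := h
  choose b hbI hb using fun i : Fin n => (g i).2
  -- build the relation
  set F : Option (Fin n) → R := fun i => i.elim x b with hF
  set X : Option (Fin n) → S := fun i => i.elim 1 (fun j => -c j) with hX
  obtain ⟨κ, a, y, hay, ha⟩ :=
    Module.Flat.isTrivialRelation_of_sum_smul_eq_zero (R := R) (M := S) (f := F) (x := X) (by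
      rw [Fintype.sum_option]
      have hterm : ∀ i : Fin n, F (some i) • X (some i) = -(c i • (g i : S)) := by
        intro i
        simp only [hF, hX, Option.elim, hsmul, mul_neg, hb i, smul_eq_mul, mul_comm]
      rw [Finset.sum_congr rfl fun i _ => hterm i, Finset.sum_neg_distrib, hg]
      simp only [hF, hX, Option.elim, hsmul, mul_one]
      ring)
  have h1 : (1 : S) = ∑ j, f (a none j) * y j := by
    have := hay none
    simpa only [hX, Option.elim, hsmul] using this
  rw [h1]
  refine Ideal.sum_mem _ fun j _ => Ideal.mul_mem_right _ _ (Ideal.mem_map_of_mem f ?_)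
  rw [Ideal.mem_colon_span_singleton]
  have := ha j
  rw [Fintype.sum_option] at this
  have hx : a none j * x = -∑ i, b i * a (some i) j := by
    simp only [hF, Option.elim] at this
    linear_combination this
  rw [hx]
  exact neg_mem (Ideal.sum_mem _ fun i _ => Ideal.mul_mem_right _ _ (hbI i))

private lemma bracketPower_map {R : Type} [CommRing R] (p : ℕ) [Fact p.Prime] [CharP R p]
    (I : Ideal R) : bracketPower I p = Ideal.map (frobenius R p) I := by
  rfl

private lemma frob_step {R : Type} [CommRing R] (p : ℕ) [Fact p.Prime] [CharP R p]
    (hreg : (frobenius R p).Flat) (J : Ideal R) (y : R)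
    (h : y ^ p ∈ bracketPower J p) : y ∈ J := by
  have h' : frobenius R p y ∈ Ideal.map (frobenius R p) J := by
    rw [frobenius_def]
    rwa [bracketPower_map] at h
  have h1 := flat_colon (frobenius R p) hreg J y h'
  set C := J.colon (Ideal.span {y}) with hCdef
  have hC : Ideal.map (frobenius R p) C ≤ C := by
    rw [Ideal.map_le_iff_le_comap]
    intro a ha
    simp only [Ideal.mem_comap, frobenius_def]
    have hp : a ^ p = a ^ (p - 1) * a := by
      rw [← pow_succ]
      congr 1
      have := (Fact.out : p.Prime).one_lt
      omega
    rw [hp]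
    exact Ideal.mul_mem_left _ _ ha
  have h2 : (1 : R) ∈ C := hC h1
  have h3 := Ideal.mem_colon_span_singleton.mp h2
  rwa [one_mul] at h3

private lemma bracketPower_mul {R : Type} [CommRing R] (p : ℕ) [Fact p.Prime] [CharP R p]
    (I : Ideal R) (a : ℕ) :
    bracketPower I (a * p) = bracketPower (bracketPower I a) p := by
  apply le_antisymm
  · rw [bracketPower, Ideal.span_le]
    rintro _ ⟨i, hi, rfl⟩
    show i ^ (a * p) ∈ bracketPower (bracketPower I a) p
    rw [pow_mul]
    exact Ideal.subset_span ⟨i ^ a, Ideal.subset_span ⟨i, hi, rfl⟩, rfl⟩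
  · rw [bracketPower, Ideal.span_le]
    rintro _ ⟨j, hj, rfl⟩
    show j ^ p ∈ bracketPower I (a * p)
    have hp0 : p ≠ 0 := (Fact.out : p.Prime).ne_zero
    induction hj using Submodule.span_induction with
    | mem z hz =>
      obtain ⟨i, hi, rfl⟩ := hz
      rw [← pow_mul]
      exact Ideal.subset_span ⟨i, hi, rfl⟩
    | zero => rw [zero_pow hp0]; exact zero_mem _
    | add u v _ _ hu hv => rw [add_pow_char]; exact add_mem hu hv
    | smul r u _ hu =>
      rw [smul_eq_mul, mul_pow]
      exact Ideal.mul_mem_left _ _ hu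

theorem frobeniusClosed_of_regular
    (R : Type) [CommRing R] [IsNoetherianRing R] (p : ℕ) [Fact p.Prime]
    [CharP R p] (hreg : (frobenius R p).Flat) :
    ∀ (I : Ideal R) (x : R), (∃ e : ℕ, x ^ p ^ e ∈ bracketPower I (p ^ e)) →
      x ∈ I := by
  rintro I x ⟨e, he⟩
  induction e generalizing x with
  | zero =>
    rw [pow_zero, pow_one] at he
    have h1 : bracketPower I 1 = I := by
      rw [bracketPower]
      simp only [pow_one]
      rw [Set.image_id', Ideal.span_eq]
    rwa [h1] at he
  | succ e ih =>
    apply ih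
    apply frob_step p hreg
    rw [← pow_mul]
    rwa [pow_succ, bracketPower_mul, ← pow_succ] at he
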